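/- arXiv:2304.10803 — 3 statements merged into one kernel-verified Lean document; each statement's English description precedes it below -/
import Mathlib

section
/- For holomorphic (or formal power series / polynomial) functions f1, f2, f3 and any weights λ1, λ2, λ3, the first Rankin–Cohen bracket satisfies the Jacobi-type identity [[f1,f2]_1, f3]_1 + [[f2,f3]_1, f1]_1 + [[f3,f1]_1, f2]_1 = 0, where each bracket [fi,fj]_1 uses the weights λi, λj and the outer brackets use weights λi+λj+2 and the remaining weight. -/
open Polynomial Finset

/-- Generalized binomial coefficient `C(a, m) = (a-m+1)_m / m!`. -/
noncomputable def gbinom (a : ℂ) (m : ℕ) : ℂ :=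
  (ascPochhammer ℂ m).eval (a - m + 1) / m.factorial

/-- The Rankin–Cohen bracket of weights `l1, l2` and degree `n`, on polynomials. -/
noncomputable def RC (l1 l2 : ℂ) (n : ℕ) (f g : Polynomial ℂ) : Polynomial ℂ :=
  ∑ s ∈ Finset.range (n + 1),
    ((-1 : ℂ) ^ s * gbinom (l1 + n - 1) (n - s) * gbinom (l2 + n - 1) s) •
      (derivative^[s] f * derivative^[n - s] g)

lemma gbinom_zero (a : ℂ) : gbinom a 0 = 1 := by simp [gbinom]
lemma gbinom_one (a : ℂ) : gbinom a 1 = a := by simp [gbinom, ascPochhammer]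

lemma RC_one (l1 l2 : ℂ) (f g : Polynomial ℂ) :
    RC l1 l2 1 f g = C l1 * (f * derivative g) - C l2 * (derivative f * g) := by
  simp [RC, Finset.sum_range_succ, gbinom_zero, gbinom_one, smul_eq_C_mul]
  ring

theorem rc_jacobi_identity (l1 l2 l3 : ℂ) (f1 f2 f3 : Polynomial ℂ) :
    RC (l1 + l2 + 2) l3 1 (RC l1 l2 1 f1 f2) f3
      + RC (l2 + l3 + 2) l1 1 (RC l2 l3 1 f2 f3) f1
      + RC (l3 + l1 + 2) l2 1 (RC l3 l1 1 f3 f1) f2 = 0 := by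
  simp only [RC_one, derivative_sub, derivative_mul, derivative_C, map_add, map_ofNat, C_mul]
  ring
end

section
/- For functions f1, f2, f3 with weights λ1, λ2, λ3, the Rankin–Cohen brackets satisfy λ3·[[f1,f2]_1, f3]_0 + λ1·[[f2,f3]_1, f1]_0 + λ2·[[f3,f1]_1, f2]_0 = 0. -/
open Polynomial Finset

theorem rc_weighted_identity (l1 l2 l3 : ℂ) (f1 f2 f3 : Polynomial ℂ) :
    l3 • RC (l1 + l2 + 2) l3 0 (RC l1 l2 1 f1 f2) f3
      + l1 • RC (l2 + l3 + 2) l1 0 (RC l2 l3 1 f2 f3) f1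
      + l2 • RC (l3 + l1 + 2) l2 0 (RC l3 l1 1 f3 f1) f2 = 0 := by
  simp only [RC, gbinom, Finset.sum_range_succ, Finset.sum_range_zero,
    ascPochhammer_zero, ascPochhammer_one, Polynomial.eval_one, Polynomial.eval_X,
    Nat.factorial_zero, Nat.factorial_one, Function.iterate_zero, Function.iterate_one,
    id_eq, Nat.sub_self, Nat.sub_zero, pow_zero, pow_one, zero_add]
  simp only [one_mul, mul_one, div_one, add_sub_cancel_right, sub_add_cancel, smul_smul,
    Polynomial.smul_eq_C_mul, map_mul, map_neg, map_add, map_one]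
  ring_nf
end

section
/- The generating function identity Σ_{k=0}^n U^{λ1,λ2;k}_{λ3;n,p} t^k = [(λ3)_n (λ1+λ2+λ3+n-1)_p / ((λ3)_p (λ2+λ3+p-1)_p (λ2+λ3+2p)_{n-p})] · ₂F₁(-p, λ1+n-p; λ1+λ2+λ3+n-1; t) · ₂F₁(p-n, p+λ2; -λ3-n+1; t) holds for all p ∈ {0,...,n} (both hypergeometric factors are polynomials in t). -/
open Finset

/-- Rising Pochhammer symbol `(x)_m`. -/
noncomputable def poch (x : ℂ) (m : ℕ) : ℂ := (ascPochhammer ℂ m).eval x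

/-- Racah polynomial value
`R_{p,k} = ₄F₃(-p, p+λ2+λ3-1, -k, k+λ1+λ2-1; λ2, λ1+λ2+λ3+n-1, -n; 1)`,
a terminating sum. -/
noncomputable def Racah (l1 l2 l3 : ℂ) (n p k : ℕ) : ℂ :=
  ∑ j ∈ Finset.range (min p k + 1),
    poch (-(p : ℂ)) j * poch ((p : ℂ) + l2 + l3 - 1) j * poch (-(k : ℂ)) j *
        poch ((k : ℂ) + l1 + l2 - 1) j /
      (poch l2 j * poch (l1 + l2 + l3 + (n : ℂ) - 1) j * poch (-(n : ℂ)) j *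
        (j.factorial : ℂ))

/-- The coefficient `U^{λ1,λ2;k}_{λ3;n,p}`. -/
noncomputable def Ucoef (l1 l2 l3 : ℂ) (n p k : ℕ) : ℂ :=
  (n.choose k : ℂ) *
      (poch l2 k * poch l3 (n - k) * poch (l1 + l2 + l3 + (n : ℂ) - 1) p /
        (poch l3 p * poch (l2 + l3 + (p : ℂ) - 1) p * poch (l2 + l3 + 2 * (p : ℂ)) (n - p))) *
    Racah l1 l2 l3 n p k

/-- Terminating Gauss hypergeometric polynomial `₂F₁(-m, b; c; t)`. -/
noncomputable def F21 (m : ℕ) (b c t : ℂ) : ℂ :=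
  ∑ j ∈ Finset.range (m + 1),
    poch (-(m : ℂ)) j * poch b j / (poch c j * (j.factorial : ℂ)) * t ^ j


noncomputable def Acoef (l1 l2 l3 : ℝ) (n p : ℕ) : ℕ → ℂ := fun i =>
  poch (-(p:ℂ)) i * poch ((l1:ℂ)+n-p) i /
    (poch ((l1:ℂ)+l2+l3+n-1) i * (i.factorial : ℂ))

noncomputable def Bcoef (l1 l2 l3 : ℝ) (n p : ℕ) : ℕ → ℂ := fun j =>
  poch (-((n-p:ℕ):ℂ)) j * poch ((p:ℂ)+l2) j /
    (poch (-(l3:ℂ)-n+1) j * (j.factorial : ℂ))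

lemma poch_zero (x : ℂ) : poch x 0 = 1 := by simp [poch]

lemma poch_succ (x : ℂ) (m : ℕ) : poch x (m+1) = poch x m * (x + m) := by
  simp [poch, ascPochhammer_succ_eval]

lemma poch_one (x : ℂ) : poch x 1 = x := by simp [poch]

lemma poch_succ_left (x : ℂ) (m : ℕ) : poch x (m+1) = x * poch (x+1) m := by
  simp only [poch, ascPochhammer_succ_left, Polynomial.eval_mul,
    Polynomial.eval_comp, Polynomial.eval_add, Polynomial.eval_X, Polynomial.eval_one]

lemma poch_add (x : ℂ) (m r : ℕ) : poch x (m + r) = poch x m * poch (x + m) r := by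
  induction r with
  | zero => simp [poch_zero]
  | succ r ih => rw [← Nat.add_assoc, poch_succ, ih, poch_succ]; push_cast; ring

lemma poch_neg_nat (M j : ℕ) : poch (-(M:ℂ)) j = (-1)^j * (j.factorial : ℂ) * (M.choose j) := by
  rw [poch, ascPochhammer_eval_neg_eq_descPochhammer, descPochhammer_eval_eq_descFactorial,
    Nat.descFactorial_eq_factorial_mul_choose]
  push_cast; ring

lemma poch_one_sub (y : ℂ) (m : ℕ) : poch (1 - y) m = (-1)^m * poch (y - m) m := by
  induction m with
  | zero => simp [poch_zero]
  | succ m ih =>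
    rw [poch_succ, ih, poch_succ_left]
    have : y - (↑(m+1):ℂ) + 1 = y - m := by push_cast; ring
    rw [this]
    push_cast; ring

lemma poch_cast_sub (M m : ℕ) : poch ((M:ℂ) - m + 1) m = (m.factorial : ℂ) * (M.choose m) := by
  have h : ((M:ℂ) - m + 1) = 1 - ((m:ℂ) - M) := by ring
  rw [h, poch_one_sub]
  have h2 : ((m:ℂ) - M - m) = -(M:ℂ) := by ring
  rw [h2, poch_neg_nat]
  ring_nf
  rw [show m*2 = 2*m from mul_comm m 2, pow_mul]
  norm_num

lemma poch_ne_zero (x : ℂ) (m : ℕ) (h : ∀ t : ℕ, t < m → x + t ≠ 0) : poch x m ≠ 0 := by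
  induction m with
  | zero => simp [poch_zero]
  | succ m ih =>
    rw [poch_succ]
    exact mul_ne_zero (ih fun t ht => h t (ht.trans (Nat.lt_succ_self m)))
      (h m (Nat.lt_succ_self m))

/-- Cleared Pfaff–Saalschütz identity. -/
lemma saalschutz (a b c : ℂ) : ∀ (m : ℕ), (∀ t : ℕ, t < m → c + t ≠ 0) →
    ∑ s ∈ range (m+1), (m.choose s : ℂ) * poch a s * poch b s *
        poch (c + s) (m - s) * poch (c - a - b) (m - s)
      = poch (c - a) m * poch (c - b) m := by
  intro m
  induction m with
  | zero => intro _; simp [poch_zero]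
  | succ m ih =>
    intro hc
    have hcm : c + (m : ℂ) ≠ 0 := hc m (Nat.lt_succ_self m)
    have ihm := ih (fun t ht => hc t (ht.trans (Nat.lt_succ_self m)))
    set g : ℕ → ℂ := fun s => match s with
      | 0 => 0
      | Nat.succ s => -((m.choose s : ℂ) * poch a (s+1) * poch b (s+1) *
          poch (c + s) (m + 1 - s) * poch (c - a - b) (m - s)) with hg
    have key : ∀ s ∈ range (m+2),
        (c + m) * ((((m+1).choose s : ℕ) : ℂ) * poch a s * poch b s *
            poch (c + s) (m + 1 - s) * poch (c - a - b) (m + 1 - s))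
          - (c + m) * ((c - a + m) * (c - b + m)) *
            ((m.choose s : ℂ) * poch a s * poch b s *
              poch (c + s) (m - s) * poch (c - a - b) (m - s))
        = g (s+1) - g s := by
      intro s hs
      rw [mem_range] at hs
      match s with
      | 0 =>
        simp only [hg, Nat.choose_zero_right, Nat.cast_one, Nat.cast_zero, add_zero,
          Nat.sub_zero, poch_zero, zero_add]
        rw [poch_succ c m, poch_succ (c - a - b) m, poch_one, poch_one]
        ring
      | Nat.succ σ =>
        by_cases hσ : σ < m
        · obtain ⟨d, hd⟩ : ∃ d, m = σ + 1 + d := ⟨m - (σ+1), by omega⟩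
          subst hd
          have hd1 : σ + 1 + d + 1 - (σ + 1) = d + 1 := by omega
          have hd2 : σ + 1 + d - (σ + 1) = d := by omega
          have hd3 : σ + 1 + d + 1 - σ = d + 2 := by omega
          have hd4 : σ + 1 + d - σ = d + 1 := by omega
          simp only [hg, hd1, hd2, hd3, hd4]
          have hXY : ((σ+1+d).choose (σ+1) : ℂ) * (σ+1) = ((σ+1+d).choose σ) * (d+1) := by
            have h0 := Nat.choose_succ_right_eq (σ+1+d) σ
            rw [hd4] at h0
            exact_mod_cast congrArg (Nat.cast : ℕ → ℂ) h0
          have hpas : (((σ+1+d+1).choose (σ+1) : ℕ) : ℂ)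
              = ((σ+1+d).choose σ : ℂ) + ((σ+1+d).choose (σ+1) : ℂ) := by
            rw [Nat.choose_succ_succ (σ+1+d) σ]; push_cast; ring
          have ea : poch a (σ+1+1) = poch a (σ+1) * (a + (↑(σ+1) : ℂ)) := poch_succ a (σ+1)
          have eb : poch b (σ+1+1) = poch b (σ+1) * (b + (↑(σ+1) : ℂ)) := poch_succ b (σ+1)
          have ec1 : poch (c + (↑(σ+1):ℂ)) (d+1)
              = poch (c + (↑(σ+1):ℂ)) d * (c + (↑(σ+1):ℂ) + d) := poch_succ _ d
          have ec2 : poch (c + (σ:ℂ)) (d+2)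
              = (c + σ) * (poch (c + (σ:ℂ) + 1) (d+1)) := poch_succ_left _ (d+1)
          have ec3 : poch (c + (σ:ℂ) + 1) (d+1)
              = poch (c + (σ:ℂ) + 1) d * (c + (σ:ℂ) + 1 + d) := poch_succ _ d
          have ec4 : poch (c + (↑(σ+1):ℂ)) d = poch (c + (σ:ℂ) + 1) d := by
            rw [show (c + (↑(σ+1):ℂ)) = c + (σ:ℂ) + 1 by push_cast; ring]
          have ee1 : poch (c - a - b) (d+1) = poch (c - a - b) d * (c - a - b + d) :=
            poch_succ _ d
          rw [ea, eb, ec1, ec2, ec3, ec4, ee1, hpas]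
          push_cast
          linear_combination (-(c + (σ:ℂ) + 1 + d) * poch a (σ+1) * poch b (σ+1) *
            poch (c + (σ:ℂ) + 1) d * poch (c - a - b) d * (c - a - b + d)) * hXY
        · have hσm : σ = m := by omega
          subst hσm
          simp only [hg, Nat.choose_succ_self, Nat.cast_zero, Nat.choose_self, Nat.cast_one,
            Nat.sub_self, poch_zero, Nat.add_sub_cancel_left, Nat.add_sub_cancel]
          rw [poch_one]
          push_cast
          ring
    have htel : ∑ s ∈ range (m+2),
        ((c + m) * ((((m+1).choose s : ℕ) : ℂ) * poch a s * poch b s *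
            poch (c + s) (m + 1 - s) * poch (c - a - b) (m + 1 - s))
          - (c + m) * ((c - a + m) * (c - b + m)) *
            ((m.choose s : ℂ) * poch a s * poch b s *
              poch (c + s) (m - s) * poch (c - a - b) (m - s))) = 0 := by
      rw [Finset.sum_congr rfl key, Finset.sum_range_sub g]
      simp [hg, Nat.choose_succ_self]
    rw [Finset.sum_sub_distrib] at htel
    have hsum2 : ∑ s ∈ range (m+2),
        (c + m) * ((c - a + m) * (c - b + m)) *
          ((m.choose s : ℂ) * poch a s * poch b s *
            poch (c + s) (m - s) * poch (c - a - b) (m - s))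
        = (c + m) * (((c - a + m) * (c - b + m)) *
          ∑ s ∈ range (m+1), ((m.choose s : ℂ) * poch a s * poch b s *
            poch (c + s) (m - s) * poch (c - a - b) (m - s))) := by
      rw [Finset.sum_range_succ, Nat.choose_succ_self]
      push_cast
      rw [Finset.mul_sum, Finset.mul_sum]
      simp [mul_assoc]
    rw [hsum2, sub_eq_zero, ← Finset.mul_sum] at htel
    have hmain : ∑ s ∈ range (m+2), ((((m+1).choose s : ℕ) : ℂ) * poch a s * poch b s *
            poch (c + s) (m + 1 - s) * poch (c - a - b) (m + 1 - s))
        = ((c - a + m) * (c - b + m)) *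
          ∑ s ∈ range (m+1), ((m.choose s : ℂ) * poch a s * poch b s *
            poch (c + s) (m - s) * poch (c - a - b) (m - s)) :=
      mul_left_cancel₀ hcm htel
    rw [hmain, ihm, poch_succ (c-a) m, poch_succ (c-b) m]
    ring

lemma cmci (l1 l2 l3 : ℝ) (h1 : 0 < l1) (h2 : 0 < l2) (h3 : 0 < l3)
    (n p k : ℕ) (hp : p ≤ n) (hk : k ≤ n) :
    ∑ j ∈ range (k+1), ((-1:ℂ))^j * (p.choose j : ℂ) * ((n-j).choose (k-j) : ℂ) *
        poch ((p:ℂ)+l2+l3-1) j * poch ((k:ℂ)+l1+l2-1) j *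
        poch ((l2:ℂ)+j) (k-j) * poch ((l1:ℂ)+l2+l3+n-1+j) (k-j) * poch (l3:ℂ) (n-k)
  = ∑ i ∈ range (k+1), ((-1:ℂ))^i * (p.choose i : ℂ) * ((n-p).choose (k-i) : ℂ) *
        poch ((l1:ℂ)+n-p) i * poch ((p:ℂ)+l2) (k-i) * poch ((l1:ℂ)+l2+l3+n-1+i) (k-i) *
        poch (l3:ℂ) (n-k+i) := by
  set L : ℂ := (l1:ℂ)+l2+l3+n-1 with hLdef
  set a : ℂ := (l1:ℂ)+n-p with hadef
  set b : ℂ := (l3:ℂ)+n-k with hbdef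
  -- step 1 : Saalschütz expansion of each LHS term
  have step1 : ∀ j ∈ range (k+1), ((-1:ℂ))^j * (p.choose j : ℂ) * ((n-j).choose (k-j) : ℂ) *
        poch ((p:ℂ)+l2+l3-1) j * poch ((k:ℂ)+l1+l2-1) j *
        poch ((l2:ℂ)+j) (k-j) * poch (L+j) (k-j) * poch (l3:ℂ) (n-k)
      = ∑ s ∈ range (j+1),
          (((-1:ℂ))^j * (p.choose j : ℂ) * ((n-j).choose (k-j) : ℂ) *
            poch ((l2:ℂ)+j) (k-j) * poch (L+j) (k-j) * poch (l3:ℂ) (n-k)) *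
          ((j.choose s : ℂ) * poch a s * poch b s *
            poch (L + s) (j - s) * poch (L - a - b) (j - s)) := by
    intro j hj
    rw [mem_range] at hj
    have hc : ∀ t : ℕ, t < j → L + (t:ℂ) ≠ 0 := by
      intro t ht
      have hn1 : 1 ≤ n := by omega
      have hre : L + (t:ℂ) = ((l1+l2+l3+(n:ℝ)-1+(t:ℝ) : ℝ) : ℂ) := by
        rw [hLdef]; push_cast; ring
      rw [hre, Complex.ofReal_ne_zero]
      have hn1' : (1:ℝ) ≤ (n:ℝ) := by exact_mod_cast hn1
      have ht0 : (0:ℝ) ≤ (t:ℝ) := Nat.cast_nonneg t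
      nlinarith
    have hstar := saalschutz a b L j hc
    calc ((-1:ℂ))^j * (p.choose j : ℂ) * ((n-j).choose (k-j) : ℂ) *
        poch ((p:ℂ)+l2+l3-1) j * poch ((k:ℂ)+l1+l2-1) j *
        poch ((l2:ℂ)+j) (k-j) * poch (L+j) (k-j) * poch (l3:ℂ) (n-k)
        = (((-1:ℂ))^j * (p.choose j : ℂ) * ((n-j).choose (k-j) : ℂ) *
            poch ((l2:ℂ)+j) (k-j) * poch (L+j) (k-j) * poch (l3:ℂ) (n-k)) *
          (poch (L - a) j * poch (L - b) j) := by
            have g1 : ((p:ℂ)+l2+l3-1) = L - a := by rw [hLdef, hadef]; ring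
            have g2 : ((k:ℂ)+l1+l2-1) = L - b := by rw [hLdef, hbdef]; ring
            rw [g1, g2]
            ring
      _ = _ := by
            rw [← hstar, Finset.mul_sum]
  rw [Finset.sum_congr rfl step1]
  -- step 2 : swap summation order
  simp only [Finset.range_eq_Ico]; rw [← Finset.sum_Ico_Ico_comm]
  rw [← Finset.range_eq_Ico]
  -- step 3 : evaluate the inner sum for each s
  refine Finset.sum_congr rfl ?_
  intro s hs
  rw [mem_range] at hs
  have hsk : s ≤ k := by omega
  by_cases hsp : s ≤ p
  · -- main case
    have hkw : k + 1 - s = (k - s) + 1 := by omega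
    rw [Finset.sum_Ico_eq_sum_range, hkw]
    have hfacne : ((k-s).factorial : ℂ) ≠ 0 := by
      exact_mod_cast Nat.cast_ne_zero.mpr (Nat.factorial_ne_zero (k-s))
    apply mul_left_cancel₀ hfacne
    have hc' : ∀ t : ℕ, t < k - s → ((l2:ℂ) + s) + (t:ℂ) ≠ 0 := by
      intro t _
      have hre : ((l2:ℂ)+s) + (t:ℂ) = ((l2+(s:ℝ)+(t:ℝ) : ℝ) : ℂ) := by push_cast; ring
      rw [hre, Complex.ofReal_ne_zero]
      positivity
    have hstar := saalschutz (-((p-s : ℕ):ℂ)) ((l2:ℂ)+p+k-n-1) ((l2:ℂ)+s) (k-s) hc'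
    have per_r : ∀ r ∈ range ((k-s)+1),
        ((k-s).factorial : ℂ) *
          ((((-1:ℂ))^(s+r) * (p.choose (s+r) : ℂ) * ((n-(s+r)).choose (k-(s+r)) : ℂ) *
            poch ((l2:ℂ)+(s+r:ℕ)) (k-(s+r)) * poch (L+(s+r:ℕ)) (k-(s+r)) * poch (l3:ℂ) (n-k)) *
          (((s+r).choose s : ℂ) * poch a s * poch b s *
            poch (L + s) ((s+r) - s) * poch (L - a - b) ((s+r) - s)))
        = (((-1:ℂ))^s * (p.choose s : ℂ) * poch a s * poch b s *
            poch (L + (s:ℂ)) (k-s) * poch (l3:ℂ) (n-k)) *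
          (((k-s).choose r : ℂ) * poch (-((p-s : ℕ):ℂ)) r * poch ((l2:ℂ)+p+k-n-1) r *
            poch (((l2:ℂ)+s) + r) ((k-s) - r) *
            poch (((l2:ℂ)+s) - (-((p-s : ℕ):ℂ)) - ((l2:ℂ)+p+k-n-1)) ((k-s) - r)) := by
      intro r hr
      rw [mem_range] at hr
      have hrk : r ≤ k - s := by omega
      have hsrk : s + r ≤ k := by omega
      rw [show (s+r) - s = r from by omega]
      -- atomic rewrites
      have e1 : poch (L + (s:ℂ)) (k - s)
          = poch (L + (s:ℂ)) r * poch (L + ((s+r:ℕ):ℂ)) (k - (s+r)) := by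
        have h0 := poch_add (L + (s:ℂ)) r ((k-s) - r)
        rw [show r + ((k-s) - r) = k - s from by omega] at h0
        rw [h0, show L + ((s:ℂ)) + (r:ℂ) = L + ((s+r:ℕ):ℂ) from by push_cast; ring,
          show (k-s) - r = k - (s+r) from by omega]
      have e2 : poch (((l2:ℂ)+s) + r) ((k-s) - r) = poch ((l2:ℂ)+((s+r:ℕ):ℂ)) (k-(s+r)) := by
        rw [show ((l2:ℂ)+s) + (r:ℂ) = (l2:ℂ)+((s+r:ℕ):ℂ) from by push_cast; ring,
          show (k-s) - r = k - (s+r) from by omega]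
      have e3 : poch (((l2:ℂ)+s) - (-((p-s : ℕ):ℂ)) - ((l2:ℂ)+p+k-n-1)) ((k-s)-r)
          = (((k-s)-r).factorial : ℂ) * ((n-(s+r)).choose ((k-s)-r) : ℂ) := by
        have hbase : ((l2:ℂ)+s) - (-((p-s : ℕ):ℂ)) - ((l2:ℂ)+p+k-n-1)
            = ((n-(s+r) : ℕ):ℂ) - (((k-s)-r : ℕ):ℂ) + 1 := by
          push_cast [Nat.cast_sub hsp, Nat.cast_sub (show s+r ≤ n by omega),
            Nat.cast_sub hrk, Nat.cast_sub hsk]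
          ring
        rw [hbase, poch_cast_sub]
      have e4 : poch (-((p-s : ℕ):ℂ)) r = (-1)^r * (r.factorial : ℂ) * ((p-s).choose r : ℂ) :=
        poch_neg_nat (p-s) r
      have e5 : L - a - b = (l2:ℂ)+p+k-n-1 := by
        rw [hLdef, hadef, hbdef]; ring
      rw [e2, e3, e4, e5, e1]
      rw [show (k-s) - r = k - (s+r) from by omega]
      by_cases hsrp : s + r ≤ p
      · have hnat : ((k-s).factorial) * (p.choose (s+r)) * ((s+r).choose s)
            = (p.choose s) * ((k-s).choose r) * (r.factorial) * ((p-s).choose r) *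
              (((k-s)-r).factorial) := by
          have hcm := Nat.choose_mul (n := p) (Nat.le_add_right s r)
          rw [show (s+r)-s = r from by omega] at hcm
          have hfm := Nat.choose_mul_factorial_mul_factorial hrk
          calc ((k-s).factorial) * (p.choose (s+r)) * ((s+r).choose s)
              = (p.choose (s+r)) * ((s+r).choose s) * ((k-s).factorial) := by ring
            _ = (p.choose s) * ((p-s).choose r) * ((k-s).factorial) := by rw [hcm]
            _ = (p.choose s) * ((p-s).choose r) *
                (((k-s).choose r) * (r.factorial) * (((k-s)-r).factorial)) := by rw [hfm]
            _ = _ := by ring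
        have hscal : ((k-s).factorial : ℂ) * ((-1:ℂ))^(s+r) * (p.choose (s+r) : ℂ) *
              ((s+r).choose s : ℂ)
            = ((-1:ℂ))^s * (p.choose s : ℂ) * ((k-s).choose r : ℂ) *
              ((-1:ℂ))^r * (r.factorial : ℂ) * ((p-s).choose r : ℂ) *
              ((((k-s)-r).factorial : ℕ) : ℂ) := by
          rw [pow_add]
          have := congrArg (Nat.cast : ℕ → ℂ) hnat
          push_cast at this
          linear_combination ((-1:ℂ))^s * ((-1:ℂ))^r * this
        simp only [Nat.sub_sub] at hscal ⊢
        linear_combination (((n-(s+r)).choose (k-(s+r)) : ℂ) *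
          poch ((l2:ℂ)+((s+r:ℕ):ℂ)) (k-(s+r)) * poch (L+((s+r:ℕ):ℂ)) (k-(s+r)) *
          poch (l3:ℂ) (n-k) * poch a s * poch b s * poch (L+(s:ℂ)) r *
          poch ((l2:ℂ)+(p:ℂ)+(k:ℂ)-(n:ℂ)-1) r) * hscal
      · have hz1 : ((p.choose (s+r) : ℕ) : ℂ) = 0 := by
          rw [Nat.choose_eq_zero_of_lt (by omega)]; norm_num
        have hz2 : (((p-s).choose r : ℕ) : ℂ) = 0 := by
          rw [Nat.choose_eq_zero_of_lt (by omega)]; norm_num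
        rw [hz1, hz2]
        ring
    calc ((k-s).factorial : ℂ) * ∑ r ∈ range ((k-s)+1),
          ((((-1:ℂ))^(s+r) * (p.choose (s+r) : ℂ) * ((n-(s+r)).choose (k-(s+r)) : ℂ) *
            poch ((l2:ℂ)+(s+r:ℕ)) (k-(s+r)) * poch (L+(s+r:ℕ)) (k-(s+r)) * poch (l3:ℂ) (n-k)) *
          (((s+r).choose s : ℂ) * poch a s * poch b s *
            poch (L + s) ((s+r) - s) * poch (L - a - b) ((s+r) - s)))
        = ∑ r ∈ range ((k-s)+1), ((k-s).factorial : ℂ) *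
          ((((-1:ℂ))^(s+r) * (p.choose (s+r) : ℂ) * ((n-(s+r)).choose (k-(s+r)) : ℂ) *
            poch ((l2:ℂ)+(s+r:ℕ)) (k-(s+r)) * poch (L+(s+r:ℕ)) (k-(s+r)) * poch (l3:ℂ) (n-k)) *
          (((s+r).choose s : ℂ) * poch a s * poch b s *
            poch (L + s) ((s+r) - s) * poch (L - a - b) ((s+r) - s))) := by
          rw [Finset.mul_sum]
      _ = ∑ r ∈ range ((k-s)+1),
          (((-1:ℂ))^s * (p.choose s : ℂ) * poch a s * poch b s *
            poch (L + (s:ℂ)) (k-s) * poch (l3:ℂ) (n-k)) *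
          (((k-s).choose r : ℂ) * poch (-((p-s : ℕ):ℂ)) r * poch ((l2:ℂ)+p+k-n-1) r *
            poch (((l2:ℂ)+s) + r) ((k-s) - r) *
            poch (((l2:ℂ)+s) - (-((p-s : ℕ):ℂ)) - ((l2:ℂ)+p+k-n-1)) ((k-s) - r)) :=
          Finset.sum_congr rfl per_r
      _ = (((-1:ℂ))^s * (p.choose s : ℂ) * poch a s * poch b s *
            poch (L + (s:ℂ)) (k-s) * poch (l3:ℂ) (n-k)) *
          (poch (((l2:ℂ)+s) - (-((p-s : ℕ):ℂ))) (k-s) *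
            poch (((l2:ℂ)+s) - ((l2:ℂ)+p+k-n-1)) (k-s)) := by
          rw [← Finset.mul_sum, hstar]
      _ = _ := by
        have f1 : poch (((l2:ℂ)+s) - (-((p-s : ℕ):ℂ))) (k-s) = poch ((p:ℂ)+l2) (k-s) := by
          rw [show ((l2:ℂ)+s) - (-((p-s : ℕ):ℂ)) = (p:ℂ)+l2 from by
            push_cast [Nat.cast_sub hsp]; ring]
        have f2 : poch (((l2:ℂ)+s) - ((l2:ℂ)+p+k-n-1)) (k-s)
            = (((k-s)).factorial : ℂ) * ((n-p).choose (k-s) : ℂ) := by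
          have hbase : ((l2:ℂ)+s) - ((l2:ℂ)+p+k-n-1) = ((n-p : ℕ):ℂ) - (((k-s) : ℕ):ℂ) + 1 := by
            push_cast [Nat.cast_sub hp, Nat.cast_sub hsk]
            ring
          rw [hbase, poch_cast_sub]
        have f3 : poch (l3:ℂ) (n-k+s) = poch (l3:ℂ) (n-k) * poch b s := by
          rw [poch_add (l3:ℂ) (n-k) s, show (l3:ℂ) + ((n-k : ℕ):ℂ) = b from by
            rw [hbdef]; push_cast [Nat.cast_sub hk]; ring]
        rw [f1, f2, f3]
        ring
  · -- s > p : both sides vanish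
    have hz : ((p.choose s : ℕ) : ℂ) = 0 := by
      rw [Nat.choose_eq_zero_of_lt (by omega)]; norm_num
    rw [hz]
    rw [Finset.sum_eq_zero]
    · ring
    intro j hj
    rw [mem_Ico] at hj
    have hzj : ((p.choose j : ℕ) : ℂ) = 0 := by
      rw [Nat.choose_eq_zero_of_lt (by omega)]; norm_num
    rw [hzj]
    ring

-- nonvanishing helpers
lemma pochL_ne (l1 l2 l3 : ℝ) (h1 : 0 < l1) (h2 : 0 < l2) (h3 : 0 < l3) (n m : ℕ)
    (hm : m ≤ n) : poch ((l1:ℂ)+l2+l3+n-1) m ≠ 0 := by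
  apply poch_ne_zero
  intro t ht
  have hn1 : 1 ≤ n := by omega
  have hre : (l1:ℂ)+l2+l3+n-1 + (t:ℂ) = ((l1+l2+l3+(n:ℝ)-1+(t:ℝ) : ℝ) : ℂ) := by
    push_cast; ring
  rw [hre, Complex.ofReal_ne_zero]
  have hn1' : (1:ℝ) ≤ (n:ℝ) := by exact_mod_cast hn1
  have ht0 : (0:ℝ) ≤ (t:ℝ) := Nat.cast_nonneg t
  nlinarith

lemma poch_pos_ne (x : ℝ) (hx : 0 < x) (m : ℕ) : poch (x:ℂ) m ≠ 0 := by
  apply poch_ne_zero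
  intro t _
  have hre : (x:ℂ) + (t:ℂ) = ((x+(t:ℝ) : ℝ) : ℂ) := by push_cast; ring
  rw [hre, Complex.ofReal_ne_zero]
  positivity

lemma fact_ne (m : ℕ) : ((m.factorial : ℕ) : ℂ) ≠ 0 := by
  exact_mod_cast Nat.cast_ne_zero.mpr (Nat.factorial_ne_zero m)


lemma mci (l1 l2 l3 : ℝ) (h1 : 0 < l1) (h2 : 0 < l2) (h3 : 0 < l3)
    (n p k : ℕ) (hp : p ≤ n) (hk : k ≤ n) :
    (n.choose k : ℂ) * poch (l2:ℂ) k * poch (l3:ℂ) (n-k) * Racah (l1:ℂ) (l2:ℂ) (l3:ℂ) n p k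
  = poch (l3:ℂ) n * ∑ i ∈ range (k+1),
      Acoef l1 l2 l3 n p i * Bcoef l1 l2 l3 n p (k-i) := by
  simp only [Acoef, Bcoef]
  have hLk : poch ((l1:ℂ)+l2+l3+n-1) k ≠ 0 := pochL_ne l1 l2 l3 h1 h2 h3 n k hk
  apply mul_left_cancel₀ hLk
  -- extend the Racah sum
  have hracah : Racah (l1:ℂ) (l2:ℂ) (l3:ℂ) n p k
      = ∑ j ∈ range (k+1),
          poch (-(p : ℂ)) j * poch ((p : ℂ) + l2 + l3 - 1) j * poch (-(k : ℂ)) j *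
            poch ((k : ℂ) + l1 + l2 - 1) j /
          (poch (l2:ℂ) j * poch ((l1:ℂ) + l2 + l3 + n - 1) j * poch (-(n : ℂ)) j *
            (j.factorial : ℂ)) := by
    rw [Racah]
    apply Finset.sum_subset
    · apply Finset.range_subset_range.mpr; omega
    · intro j hj1 hj2
      rw [mem_range] at hj1 hj2
      have hpj : p < j := by omega
      rw [poch_neg_nat p j, Nat.choose_eq_zero_of_lt hpj]
      simp
  rw [hracah]
  -- LHS: termwise to the cmci LHS
  have lhs_eq : poch ((l1:ℂ)+l2+l3+n-1) k *
      ((n.choose k : ℂ) * poch (l2:ℂ) k * poch (l3:ℂ) (n-k) *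
        ∑ j ∈ range (k+1),
          poch (-(p : ℂ)) j * poch ((p : ℂ) + l2 + l3 - 1) j * poch (-(k : ℂ)) j *
            poch ((k : ℂ) + l1 + l2 - 1) j /
          (poch (l2:ℂ) j * poch ((l1:ℂ) + l2 + l3 + n - 1) j * poch (-(n : ℂ)) j *
            (j.factorial : ℂ)))
    = ∑ j ∈ range (k+1), ((-1:ℂ))^j * (p.choose j : ℂ) * ((n-j).choose (k-j) : ℂ) *
        poch ((p:ℂ)+l2+l3-1) j * poch ((k:ℂ)+l1+l2-1) j *
        poch ((l2:ℂ)+j) (k-j) * poch ((l1:ℂ)+l2+l3+n-1+j) (k-j) * poch (l3:ℂ) (n-k) := by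
    rw [Finset.mul_sum, Finset.mul_sum]
    refine Finset.sum_congr rfl ?_
    intro j hj
    rw [mem_range] at hj
    have hjk : j ≤ k := by omega
    have hsplit2 : poch (l2:ℂ) k = poch (l2:ℂ) j * poch ((l2:ℂ)+j) (k-j) := by
      have h0 := poch_add (l2:ℂ) j (k-j)
      rw [show j + (k-j) = k from by omega] at h0
      exact h0
    have hsplitL : poch ((l1:ℂ)+l2+l3+n-1) k
        = poch ((l1:ℂ)+l2+l3+n-1) j * poch ((l1:ℂ)+l2+l3+n-1+j) (k-j) := by
      have h0 := poch_add ((l1:ℂ)+l2+l3+n-1) j (k-j)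
      rw [show j + (k-j) = k from by omega] at h0
      exact h0
    have hnegp := poch_neg_nat p j
    have hnegk := poch_neg_nat k j
    have hnegn := poch_neg_nat n j
    have hbinom : ((n.choose k : ℕ):ℂ) * ((k.choose j : ℕ):ℂ)
        = ((n.choose j : ℕ):ℂ) * (((n-j).choose (k-j) : ℕ):ℂ) := by
      exact_mod_cast congrArg (Nat.cast : ℕ → ℂ) (Nat.choose_mul (n := n) hjk)
    have hne2 : poch (l2:ℂ) j ≠ 0 := poch_pos_ne l2 h2 j
    have hneL : poch ((l1:ℂ)+l2+l3+n-1) j ≠ 0 :=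
      pochL_ne l1 l2 l3 h1 h2 h3 n j (by omega)
    have hnen : ((n.choose j : ℕ):ℂ) ≠ 0 := by
      have := Nat.choose_pos (show j ≤ n by omega)
      exact_mod_cast Nat.cast_ne_zero.mpr (by omega)
    have hfj := fact_ne j
    have hneg1 : ((-1:ℂ))^j ≠ 0 := by
      apply pow_ne_zero; norm_num
    have hnegn_ne : poch (-(n:ℂ)) j ≠ 0 := by
      rw [hnegn]
      exact mul_ne_zero (mul_ne_zero hneg1 hfj) hnen
    have hD : poch (l2:ℂ) j * poch ((l1:ℂ) + l2 + l3 + n - 1) j * poch (-(n : ℂ)) j *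
        (j.factorial : ℂ) ≠ 0 :=
      mul_ne_zero (mul_ne_zero (mul_ne_zero hne2 hneL) hnegn_ne) hfj
    rw [show poch ((l1:ℂ)+l2+l3+n-1) k *
        ((n.choose k : ℂ) * poch (l2:ℂ) k * poch (l3:ℂ) (n-k) *
          (poch (-(p : ℂ)) j * poch ((p : ℂ) + l2 + l3 - 1) j * poch (-(k : ℂ)) j *
            poch ((k : ℂ) + l1 + l2 - 1) j /
          (poch (l2:ℂ) j * poch ((l1:ℂ) + l2 + l3 + n - 1) j * poch (-(n : ℂ)) j *
            (j.factorial : ℂ))))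
      = (poch ((l1:ℂ)+l2+l3+n-1) k * (n.choose k : ℂ) * poch (l2:ℂ) k * poch (l3:ℂ) (n-k) *
          (poch (-(p : ℂ)) j * poch ((p : ℂ) + l2 + l3 - 1) j * poch (-(k : ℂ)) j *
            poch ((k : ℂ) + l1 + l2 - 1) j)) /
        (poch (l2:ℂ) j * poch ((l1:ℂ) + l2 + l3 + n - 1) j * poch (-(n : ℂ)) j *
            (j.factorial : ℂ)) from by ring]
    rw [div_eq_iff hD]
    rw [hsplit2, hsplitL, hnegp, hnegk, hnegn]
    linear_combination (((-1:ℂ))^j)^2 * (j.factorial : ℂ)^2 * (p.choose j : ℂ) *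
      poch ((p:ℂ)+l2+l3-1) j * poch ((k:ℂ)+l1+l2-1) j * poch ((l2:ℂ)+j) (k-j) *
      poch ((l1:ℂ)+l2+l3+n-1+j) (k-j) * poch (l3:ℂ) (n-k) * poch (l2:ℂ) j *
      poch ((l1:ℂ)+l2+l3+n-1) j * hbinom
  rw [lhs_eq, cmci l1 l2 l3 h1 h2 h3 n p k hp hk]
  -- RHS : termwise from the cmci RHS
  rw [Finset.mul_sum, Finset.mul_sum]
  refine Finset.sum_congr rfl ?_
  intro i hi
  symm
  rw [mem_range] at hi
  have hik : i ≤ k := by omega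
  by_cases hki : k - i ≤ n - p
  · have hsplitL : poch ((l1:ℂ)+l2+l3+n-1) k
        = poch ((l1:ℂ)+l2+l3+n-1) i * poch ((l1:ℂ)+l2+l3+n-1+i) (k-i) := by
      have h0 := poch_add ((l1:ℂ)+l2+l3+n-1) i (k-i)
      rw [show i + (k-i) = k from by omega] at h0
      exact h0
    have hnegp := poch_neg_nat p i
    have hnegnp := poch_neg_nat (n-p) (k-i)
    have honesub : poch (-(l3:ℂ)-n+1) (k-i)
        = (-1)^(k-i) * poch ((l3:ℂ)+n-(k-i:ℕ)) (k-i) := by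
      rw [show (-(l3:ℂ)-n+1) = 1 - ((l3:ℂ)+n) from by ring, poch_one_sub]
    have hsplit3 : poch (l3:ℂ) n
        = poch (l3:ℂ) (n-k+i) * poch ((l3:ℂ)+n-(k-i:ℕ)) (k-i) := by
      have h0 := poch_add (l3:ℂ) (n-k+i) (k-i)
      rw [show (n-k+i) + (k-i) = n from by omega] at h0
      rw [h0, show (l3:ℂ) + ((n-k+i : ℕ):ℂ) = (l3:ℂ)+n-(k-i:ℕ) from by
        push_cast [Nat.cast_sub (show k-i ≤ n by omega), Nat.cast_sub hik,
          Nat.cast_sub hk]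
        ring]
    have hne3 : poch ((l3:ℂ)+n-(k-i:ℕ)) (k-i) ≠ 0 := by
      apply poch_ne_zero
      intro t _
      have hre : (l3:ℂ)+n-(k-i:ℕ) + (t:ℂ)
          = ((l3+((n-(k-i):ℕ):ℝ)+(t:ℝ) : ℝ) : ℂ) := by
        push_cast [Nat.cast_sub (show k-i ≤ n by omega)]
        ring
      rw [hre, Complex.ofReal_ne_zero]
      positivity
    have hneL : poch ((l1:ℂ)+l2+l3+n-1) i ≠ 0 :=
      pochL_ne l1 l2 l3 h1 h2 h3 n i (by omega)
    have hfi := fact_ne i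
    have hfki := fact_ne (k-i)
    have hneg1 : ((-1:ℂ))^(k-i) ≠ 0 := by apply pow_ne_zero; norm_num
    have hD1 : poch ((l1:ℂ)+l2+l3+n-1) i * (i.factorial : ℂ) ≠ 0 :=
      mul_ne_zero hneL hfi
    have honesub_ne : poch (-(l3:ℂ)-n+1) (k-i) ≠ 0 := by
      rw [honesub]
      exact mul_ne_zero hneg1 hne3
    have hD2 : poch (-(l3:ℂ)-n+1) (k-i) * ((k-i).factorial : ℂ) ≠ 0 :=
      mul_ne_zero honesub_ne hfki
    rw [show poch ((l1:ℂ)+l2+l3+n-1) k *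
        (poch (l3:ℂ) n *
          ((poch (-(p:ℂ)) i * poch ((l1:ℂ)+n-p) i /
            (poch ((l1:ℂ)+l2+l3+n-1) i * (i.factorial : ℂ))) *
          (poch (-((n-p:ℕ):ℂ)) (k-i) * poch ((p:ℂ)+l2) (k-i) /
            (poch (-(l3:ℂ)-n+1) (k-i) * ((k-i).factorial : ℂ)))))
      = (poch ((l1:ℂ)+l2+l3+n-1) k * poch (l3:ℂ) n *
          (poch (-(p:ℂ)) i * poch ((l1:ℂ)+n-p) i) *
          (poch (-((n-p:ℕ):ℂ)) (k-i) * poch ((p:ℂ)+l2) (k-i))) /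
        ((poch ((l1:ℂ)+l2+l3+n-1) i * (i.factorial : ℂ)) *
          (poch (-(l3:ℂ)-n+1) (k-i) * ((k-i).factorial : ℂ))) from by ring]
    rw [div_eq_iff (mul_ne_zero hD1 hD2)]
    rw [hsplitL, hnegp, hnegnp, honesub, hsplit3]
    ring
  · -- vanishing terms
    have hlt : n - p < k - i := by omega
    rw [poch_neg_nat (n-p) (k-i), Nat.choose_eq_zero_of_lt hlt]
    simp

lemma cauchy (f g : ℕ → ℂ) (N M K : ℕ) (hN : 1 ≤ N) (hM : 1 ≤ M)
    (hf : ∀ i, N ≤ i → f i = 0) (hg : ∀ j, M ≤ j → g j = 0)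
    (hK : N + M ≤ K + 1) (t : ℂ) :
    (∑ i ∈ range N, f i * t^i) * (∑ j ∈ range M, g j * t^j)
      = ∑ k ∈ range K, (∑ i ∈ range (k+1), f i * g (k-i)) * t^k := by
  set PA : Polynomial ℂ := ∑ i ∈ range N, Polynomial.C (f i) * Polynomial.X ^ i with hPA
  set PB : Polynomial ℂ := ∑ j ∈ range M, Polynomial.C (g j) * Polynomial.X ^ j with hPB
  have hA : ∀ i, PA.coeff i = f i := by
    intro i
    rw [hPA, Polynomial.finset_sum_coeff]
    simp only [Polynomial.coeff_C_mul, Polynomial.coeff_X_pow, mul_ite, mul_one, mul_zero]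
    rw [Finset.sum_ite_eq (range N) i f]
    by_cases hi : i < N
    · simp [hi]
    · simp [hi, hf i (by omega)]
  have hB : ∀ j, PB.coeff j = g j := by
    intro j
    rw [hPB, Polynomial.finset_sum_coeff]
    simp only [Polynomial.coeff_C_mul, Polynomial.coeff_X_pow, mul_ite, mul_one, mul_zero]
    rw [Finset.sum_ite_eq (range M) j g]
    by_cases hj : j < M
    · simp [hj]
    · simp [hj, hg j (by omega)]
  have hdA : PA.natDegree ≤ N - 1 := by
    apply Polynomial.natDegree_sum_le_of_forall_le
    intro i hi
    rw [mem_range] at hi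
    refine le_trans (Polynomial.natDegree_C_mul_le _ _) ?_
    rw [Polynomial.natDegree_X_pow]
    omega
  have hdB : PB.natDegree ≤ M - 1 := by
    apply Polynomial.natDegree_sum_le_of_forall_le
    intro j hj
    rw [mem_range] at hj
    refine le_trans (Polynomial.natDegree_C_mul_le _ _) ?_
    rw [Polynomial.natDegree_X_pow]
    omega
  have hdeg : (PA * PB).natDegree < K := by
    refine lt_of_le_of_lt (Polynomial.natDegree_mul_le) ?_
    omega
  have evA : PA.eval t = ∑ i ∈ range N, f i * t^i := by
    rw [hPA, Polynomial.eval_finset_sum]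
    simp [Polynomial.eval_mul, Polynomial.eval_pow]
  have evB : PB.eval t = ∑ j ∈ range M, g j * t^j := by
    rw [hPB, Polynomial.eval_finset_sum]
    simp [Polynomial.eval_mul, Polynomial.eval_pow]
  calc (∑ i ∈ range N, f i * t^i) * (∑ j ∈ range M, g j * t^j)
      = (PA * PB).eval t := by rw [Polynomial.eval_mul, evA, evB]
    _ = ∑ k ∈ range K, (PA * PB).coeff k * t^k := Polynomial.eval_eq_sum_range' hdeg t
    _ = _ := by
        refine Finset.sum_congr rfl ?_
        intro k _
        congr 1
        rw [Polynomial.coeff_mul, Finset.Nat.sum_antidiagonal_eq_sum_range_succ_mk]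
        exact Finset.sum_congr rfl fun i _ => by rw [hA, hB]

theorem ucoef_generating_function (l1 l2 l3 : ℝ) (h1 : 0 < l1) (h2 : 0 < l2) (h3 : 0 < l3)
    (n p : ℕ) (hp : p ≤ n) (t : ℂ) :
    ∑ k ∈ Finset.range (n + 1), Ucoef (l1 : ℂ) (l2 : ℂ) (l3 : ℂ) n p k * t ^ k
      = poch (l3 : ℂ) n * poch ((l1 : ℂ) + l2 + l3 + n - 1) p /
          (poch (l3 : ℂ) p * poch ((l2 : ℂ) + l3 + p - 1) p *
            poch ((l2 : ℂ) + l3 + 2 * p) (n - p)) *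
        F21 p ((l1 : ℂ) + n - p) ((l1 : ℂ) + l2 + l3 + n - 1) t *
        F21 (n - p) ((p : ℂ) + l2) (-(l3 : ℂ) - n + 1) t := by

  have hfA : ∀ i, p+1 ≤ i → Acoef l1 l2 l3 n p i = 0 := by
    intro i hi
    simp only [Acoef]
    rw [poch_neg_nat, Nat.choose_eq_zero_of_lt (by omega)]
    simp
  have hfB : ∀ j, (n-p)+1 ≤ j → Bcoef l1 l2 l3 n p j = 0 := by
    intro j hj
    simp only [Bcoef]
    rw [poch_neg_nat, Nat.choose_eq_zero_of_lt (by omega)]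
    simp
  have hcau := cauchy (Acoef l1 l2 l3 n p) (Bcoef l1 l2 l3 n p) (p+1) ((n-p)+1) (n+1)
      (by omega) (by omega) hfA hfB (by omega) t
  have hF1 : F21 p ((l1:ℂ) + n - p) ((l1:ℂ)+l2+l3+n-1) t
      = ∑ i ∈ range (p+1), Acoef l1 l2 l3 n p i * t^i := rfl
  have hF2 : F21 (n-p) ((p:ℂ)+l2) (-(l3:ℂ)-n+1) t
      = ∑ j ∈ range ((n-p)+1), Bcoef l1 l2 l3 n p j * t^j := rfl
  rw [hF1, hF2]
  calc ∑ k ∈ range (n+1), Ucoef (l1 : ℂ) (l2 : ℂ) (l3 : ℂ) n p k * t ^ k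
      = ∑ k ∈ range (n+1),
          (poch (l3:ℂ) n * poch ((l1:ℂ)+l2+l3+n-1) p /
            (poch (l3:ℂ) p * poch ((l2:ℂ)+l3+p-1) p * poch ((l2:ℂ)+l3+2*p) (n-p))) *
          ((∑ i ∈ range (k+1), Acoef l1 l2 l3 n p i * Bcoef l1 l2 l3 n p (k-i)) * t^k) := by
        refine Finset.sum_congr rfl ?_
        intro k hk
        rw [mem_range] at hk
        have hm := mci l1 l2 l3 h1 h2 h3 n p k hp (by omega)
        simp only [Ucoef]
        linear_combination (poch ((l1:ℂ)+l2+l3+n-1) p /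
          (poch (l3:ℂ) p * poch ((l2:ℂ)+l3+p-1) p * poch ((l2:ℂ)+l3+2*p) (n-p)) * t^k) * hm
    _ = (poch (l3:ℂ) n * poch ((l1:ℂ)+l2+l3+n-1) p /
            (poch (l3:ℂ) p * poch ((l2:ℂ)+l3+p-1) p * poch ((l2:ℂ)+l3+2*p) (n-p))) *
          ∑ k ∈ range (n+1),
            (∑ i ∈ range (k+1), Acoef l1 l2 l3 n p i * Bcoef l1 l2 l3 n p (k-i)) * t^k := by
        rw [Finset.mul_sum]
    _ = _ := by
        rw [← hcau]
        ring
end
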